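/- arXiv:2510.10144 — 3 statements merged into one kernel-verified Lean document; each statement's English description precedes it below -/
import Mathlib

section
/- Let A be a unital associative algebra over ℚ and I ⊆ A a two-sided ideal with I^N = 0 for some N ≥ 1. Then for all x, y ∈ I, the linear endomorphism exp(ad_{BCH(x,y)}) of A equals the composite exp(ad_x) ∘ exp(ad_y); that is, for every a ∈ A, Σ_{n≥0} (1/n!)·ad_{BCH(x,y)}ⁿ(a) = Σ_{n≥0} (1/n!)·ad_xⁿ( Σ_{m≥0} (1/m!)·ad_yᵐ(a) ). -/
/-!
Setting: `A` a unital associative ℚ-algebra, `I ⊆ A` a two-sided ideal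
(encoded as a `Submodule ℚ A` with `⊤ * I ≤ I` and `I * ⊤ ≤ I`, powers taken
as submodule products) with `I ^ N = ⊥`.  For `x ∈ I` the exponential
`exp x = Σ_{k≥0} x^k/k!` and logarithm `log(1+u) = Σ_{k≥1} (-1)^{k-1} u^k/k`
are finite sums; truncating at `N` captures all (possibly) nonzero terms.
-/

/-- The (truncated) exponential `Σ_{k<n} x^k / k!` of a nilpotent element. -/
noncomputable def expNil {A : Type*} [Ring A] [Algebra ℚ A] (n : ℕ) (x : A) : A :=
  ∑ k ∈ Finset.range n, (k.factorial : ℚ)⁻¹ • x ^ k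

/-- The (truncated) logarithm `log(1+u) = Σ_{0≤k<n} (-1)^k u^(k+1)/(k+1)`. -/
noncomputable def logNil {A : Type*} [Ring A] [Algebra ℚ A] (n : ℕ) (u : A) : A :=
  ∑ k ∈ Finset.range n, (((-1 : ℚ) ^ k / (k + 1))) • u ^ (k + 1)

/-- The Baker–Campbell–Hausdorff element `BCH(x,y) = log(exp x · exp y)`. -/
noncomputable def bch {A : Type*} [Ring A] [Algebra ℚ A] (n : ℕ) (x y : A) : A :=
  logNil n (expNil n x * expNil n y - 1)

/-- The adjoint operator `ad_λ(a) = λa − aλ`. -/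
def adA {A : Type*} [Ring A] (l a : A) : A := l * a - a * l

open Polynomial Finset

section Scratch
variable {A : Type*} [Ring A] [Algebra ℚ A]

lemma expNil_eq_of_le {M : ℕ} {u : A} (hu : u ^ M = 0) {n : ℕ} (h : M ≤ n) :
    expNil n u = expNil M u := by
  unfold expNil
  rw [← Finset.sum_subset (Finset.range_subset_range.2 h)]
  intro k hk hk'
  have : u ^ k = 0 := pow_eq_zero_of_le (by simpa using hk') hu
  simp [this]

lemma aeval_expNil (u : A) (n : ℕ) (p : ℚ[X]) :
    aeval u (expNil n p) = expNil n (aeval u p) := by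
  simp [expNil, map_sum, map_pow]

lemma aeval_logNil (u : A) (n : ℕ) (p : ℚ[X]) :
    aeval u (logNil n p) = logNil n (aeval u p) := by
  simp [logNil, map_sum, map_pow]

lemma aeval_eq_of_coeff_eq {M : ℕ} (p q : ℚ[X]) (h : ∀ k < M, p.coeff k = q.coeff k)
    {u : A} (hu : u ^ M = 0) : aeval u p = aeval u q := by
  have key : ∀ r : ℚ[X], (∀ k < M, r.coeff k = 0) → aeval u r = 0 := by
    intro r hr
    rw [Polynomial.aeval_eq_sum_range]
    apply Finset.sum_eq_zero
    intro k _
    rcases lt_or_ge k M with hk | hk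
    · simp [hr k hk]
    · rw [pow_eq_zero_of_le hk hu, smul_zero]
  have h1 := key (p - q) (by intro k hk; simp [h k hk])
  rw [map_sub, sub_eq_zero] at h1
  exact h1

end Scratch

lemma lowcoeff_pow {p : ℚ[X]} (hp : p.coeff 0 = 0) (M : ℕ) {k : ℕ} (hk : k < M) :
    (p ^ M).coeff k = 0 := by
  have hd : X ∣ p := Polynomial.X_dvd_iff.2 hp
  obtain ⟨r, hr⟩ := pow_dvd_pow_of_dvd hd M
  rw [hr, mul_comm, Polynomial.coeff_mul_X_pow', if_neg (by omega)]

lemma lowcoeff_mul_X_pow (q : ℚ[X]) (M : ℕ) {k : ℕ} (hk : k < M) :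
    (q * X ^ M).coeff k = 0 := by
  rw [Polynomial.coeff_mul_X_pow', if_neg (by omega)]

lemma ode_unique (M : ℕ) (H : ℚ[X]) (h0 : H.coeff 0 = 0)
    (hode : ∀ k < M, ((1 + Polynomial.X) * Polynomial.derivative H - H).coeff k = 0) :
    ∀ k ≤ M, H.coeff k = 0 := by
  intro k
  induction k with
  | zero => intro _; exact h0
  | succ k ih =>
    intro hk
    have hk' : k < M := by omega
    have h1 := hode k hk'
    have hkk : H.coeff k = 0 := ih (by omega)
    rw [one_add_mul, Polynomial.coeff_sub, Polynomial.coeff_add, Polynomial.coeff_derivative] at h1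
    have hX : (X * Polynomial.derivative H).coeff k = (k : ℚ) * H.coeff k := by
      cases k with
      | zero => simp
      | succ j =>
        rw [Polynomial.coeff_X_mul, Polynomial.coeff_derivative, hkk]
        simp
    rw [hX, hkk, mul_zero, add_zero, sub_zero] at h1
    have hne : ((k:ℚ) + 1) ≠ 0 := by positivity
    rcases mul_eq_zero.1 h1 with h | h
    · exact h
    · exact absurd h (by positivity)

lemma derivative_logNil (M : ℕ) :
    Polynomial.derivative (logNil M (X : ℚ[X])) = ∑ k ∈ Finset.range M, (-X : ℚ[X]) ^ k := by
  unfold logNil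
  rw [map_sum]
  apply Finset.sum_congr rfl
  intro k _
  rw [Polynomial.derivative_smul, Polynomial.derivative_X_pow]
  simp only [Nat.add_sub_cancel]
  rw [Polynomial.smul_eq_C_mul, ← mul_assoc, ← Polynomial.C_mul]
  have hc : ((-1 : ℚ) ^ k / ((k:ℚ) + 1)) * (((k:ℕ)+1 : ℕ) : ℚ) = (-1) ^ k := by
    have : ((k:ℚ) + 1) ≠ 0 := by positivity
    push_cast
    field_simp
  rw [hc, neg_pow, neg_pow (X : ℚ[X])]
  simp [map_pow]

lemma one_add_X_mul_derivative_logNil (M : ℕ) :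
    (1 + X : ℚ[X]) * Polynomial.derivative (logNil M (X : ℚ[X])) = 1 - (-X) ^ M := by
  rw [derivative_logNil]
  have := geom_sum_mul (-X : ℚ[X]) M
  linear_combination -this

lemma derivative_expNil (n : ℕ) (p : ℚ[X]) :
    Polynomial.derivative (expNil (n+1) p) = expNil n p * Polynomial.derivative p := by
  unfold expNil
  rw [map_sum, Finset.sum_range_succ', Finset.sum_mul]
  simp only [pow_zero, Polynomial.derivative_smul, Polynomial.derivative_one, smul_zero, add_zero]
  apply Finset.sum_congr rfl
  intro k _
  rw [Polynomial.derivative_pow, Polynomial.smul_eq_C_mul, Polynomial.smul_eq_C_mul]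
  simp only [Nat.add_sub_cancel]
  rw [← mul_assoc, ← mul_assoc, ← Polynomial.C_mul]
  have hc : ((k+1).factorial : ℚ)⁻¹ * ((k:ℕ)+1 : ℚ) = ((k.factorial : ℚ))⁻¹ := by
    rw [Nat.factorial_succ]
    have h1 : ((k.factorial : ℚ)) ≠ 0 := Nat.cast_ne_zero.2 k.factorial_ne_zero
    have h2 : ((k:ℚ) + 1) ≠ 0 := by positivity
    push_cast
    field_simp
  have : ((k+1:ℕ) : ℚ) = (k:ℚ) + 1 := by push_cast; ring
  rw [this, hc]

lemma coeff_zero_logNil (M : ℕ) : (logNil M (X : ℚ[X])).coeff 0 = 0 := by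
  unfold logNil
  rw [Polynomial.finset_sum_coeff]
  apply Finset.sum_eq_zero
  intro k _
  rw [Polynomial.coeff_smul, Polynomial.coeff_X_pow, if_neg (by omega), smul_zero]

lemma coeff_zero_expNil {n : ℕ} (hn : 1 ≤ n) {p : ℚ[X]} (hp : p.coeff 0 = 0) :
    (expNil n p).coeff 0 = 1 := by
  unfold expNil
  rw [Polynomial.finset_sum_coeff]
  obtain ⟨m, rfl⟩ : ∃ m, n = m + 1 := ⟨n - 1, by omega⟩
  rw [Finset.sum_range_succ']
  have : ∀ k ∈ Finset.range m, (((k+1).factorial : ℚ)⁻¹ • (p ^ (k+1) : ℚ[X])).coeff 0 = 0 := by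
    intro k _
    rw [Polynomial.coeff_smul]
    have : (p ^ (k+1)).coeff 0 = 0 := by
      rw [Polynomial.coeff_zero_eq_eval_zero, Polynomial.eval_pow,
        ← Polynomial.coeff_zero_eq_eval_zero, hp, zero_pow (by omega)]
    rw [this, smul_zero]
  rw [Finset.sum_eq_zero this]
  simp

lemma exp_log_coeff (M : ℕ) :
    ∀ k ≤ M, (expNil (M+1) (logNil M (X : ℚ[X]))).coeff k = (1 + X : ℚ[X]).coeff k := by
  set L := logNil M (X : ℚ[X]) with hLdef
  set F := expNil (M+1) L with hFdef
  have hL0 : L.coeff 0 = 0 := coeff_zero_logNil M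
  intro k hk
  have key : ∀ j ≤ M, (F - (1 + X)).coeff j = 0 := by
    apply ode_unique
    · rw [Polynomial.coeff_sub, coeff_zero_expNil (by omega) hL0]
      simp
    · intro j hj
      have hsub : (1 + X : ℚ[X]) * Polynomial.derivative (F - (1+X)) - (F - (1+X))
          = (1 + X) * Polynomial.derivative F - F := by
        rw [map_sub]
        simp only [Polynomial.derivative_add, Polynomial.derivative_one, Polynomial.derivative_X]
        ring
      rw [hsub]
      have hF' : Polynomial.derivative F = expNil M L * Polynomial.derivative L :=
        derivative_expNil M L
      have hFsplit : F = expNil M L + ((M.factorial : ℚ)⁻¹) • L ^ M := by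
        rw [hFdef]; unfold expNil; rw [Finset.sum_range_succ]
      have hmain : (1 + X : ℚ[X]) * Polynomial.derivative F - F
          = -((expNil M L * (-1:ℚ[X])^M) * X ^ M) - ((M.factorial : ℚ)⁻¹) • L ^ M := by
        rw [hF', hFsplit]
        have hg : (1 + X : ℚ[X]) * Polynomial.derivative L = 1 - (-X) ^ M :=
          one_add_X_mul_derivative_logNil M
        have : (1 + X : ℚ[X]) * (expNil M L * Polynomial.derivative L)
            = expNil M L * ((1 + X) * Polynomial.derivative L) := by ring
        rw [this, hg, neg_pow (X : ℚ[X])]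
        ring
      rw [hmain, Polynomial.coeff_sub, Polynomial.coeff_neg, lowcoeff_mul_X_pow _ M hj,
        Polynomial.coeff_smul, lowcoeff_pow hL0 M hj, smul_zero]
      ring
  have := key k hk
  rwa [Polynomial.coeff_sub, sub_eq_zero] at this

lemma expNil_logNil {A : Type*} [Ring A] [Algebra ℚ A] {M : ℕ} {u : A} (hu : u ^ M = 0) :
    expNil (M+1) (logNil M u) = 1 + u := by
  have h := aeval_eq_of_coeff_eq (M := M) (expNil (M+1) (logNil M (X : ℚ[X]))) (1 + X)
    (fun k hk => exp_log_coeff M k hk.le) hu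
  rwa [aeval_expNil, aeval_logNil, map_add, map_one, Polynomial.aeval_X] at h

lemma exp_mul_exp_neg_coeff (m : ℕ) :
    ∀ k < m + 1,
      (expNil (m+1) (X : ℚ[X]) * expNil (m+1) (-X : ℚ[X])).coeff k = (1 : ℚ[X]).coeff k := by
  set P := expNil (m+1) (X : ℚ[X]) * expNil (m+1) (-X : ℚ[X]) with hP
  have hCoeff0 : P.coeff 0 = 1 := by
    rw [hP, Polynomial.mul_coeff_zero, coeff_zero_expNil (by omega) (by simp),
      coeff_zero_expNil (by omega) (by simp)]
    norm_num
  have hder : ∀ k < m, (Polynomial.derivative P).coeff k = 0 := by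
    intro k hk
    have hP' : Polynomial.derivative P
        = -((((m.factorial : ℚ)⁻¹) • expNil (m+1) (-X : ℚ[X])) * X ^ m)
          + (((m.factorial : ℚ)⁻¹ * (-1:ℚ)^m) • expNil (m+1) (X : ℚ[X])) * X ^ m := by
      rw [hP, Polynomial.derivative_mul, derivative_expNil, derivative_expNil]
      have e1 : expNil m (X : ℚ[X]) = expNil (m+1) (X : ℚ[X]) - (m.factorial : ℚ)⁻¹ • X ^ m := by
        unfold expNil; rw [Finset.sum_range_succ]; ring
      have e2 : expNil m (-X : ℚ[X])
          = expNil (m+1) (-X : ℚ[X]) - ((m.factorial : ℚ)⁻¹ * (-1:ℚ)^m) • X ^ m := by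
        unfold expNil
        rw [Finset.sum_range_succ, ← neg_one_smul ℚ (X : ℚ[X]), _root_.smul_pow, smul_smul]
        ring
      rw [e1, e2]
      simp only [Polynomial.derivative_neg, Polynomial.derivative_X]
      simp only [Polynomial.smul_eq_C_mul]
      ring
    rw [hP', Polynomial.coeff_add, Polynomial.coeff_neg, lowcoeff_mul_X_pow _ m hk,
      lowcoeff_mul_X_pow _ m hk]
    ring
  intro k hk
  cases k with
  | zero => simpa using hCoeff0
  | succ j =>
    have h1 := hder j (by omega)
    rw [Polynomial.coeff_derivative] at h1
    have hne : ((j:ℚ) + 1) ≠ 0 := by positivity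
    rcases mul_eq_zero.1 h1 with h | h
    · rw [Polynomial.coeff_one]
      simp [h]
    · exact absurd h (by positivity)

lemma expNil_mul_expNil_neg {A : Type*} [Ring A] [Algebra ℚ A] {M : ℕ} (hM : 1 ≤ M) {u : A}
    (hu : u ^ M = 0) : expNil M u * expNil M (-u) = 1 := by
  obtain ⟨m, rfl⟩ : ∃ m, M = m + 1 := ⟨M - 1, by omega⟩
  have h := aeval_eq_of_coeff_eq (M := m+1)
    (expNil (m+1) (X : ℚ[X]) * expNil (m+1) (-X : ℚ[X])) 1
    (fun k hk => exp_mul_exp_neg_coeff m k hk) hu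
  rwa [map_mul, aeval_expNil, aeval_expNil, map_neg, Polynomial.aeval_X, map_one] at h




section
variable {A : Type*} [Ring A] [Algebra ℚ A]

lemma adA_eq (l : A) :
    adA l = ⇑(LinearMap.mulLeft ℚ l + LinearMap.mulRight ℚ (-l)) := by
  funext a
  simp [adA, LinearMap.mulLeft_apply, LinearMap.mulRight_apply, sub_eq_add_neg]

lemma adA_iterate (l a : A) (n : ℕ) :
    (adA l)^[n] a = ∑ k ∈ Finset.range (n+1), (n.choose k) • (l ^ k * a * (-l) ^ (n - k)) := by
  rw [adA_eq, ← Module.End.pow_apply]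
  rw [Commute.add_pow (LinearMap.commute_mulLeft_right l (-l))]
  rw [LinearMap.sum_apply]
  apply Finset.sum_congr rfl
  intro k _
  rw [LinearMap.pow_mulLeft, LinearMap.pow_mulRight]
  simp only [Module.End.mul_apply, Module.End.natCast_apply, map_nsmul,
    LinearMap.mulLeft_apply, LinearMap.mulRight_apply]
  rw [mul_assoc]
end

lemma triangle_sum {β : Type*} [AddCommMonoid β] (M : ℕ) (f : ℕ → ℕ → β)
    (hf : ∀ i j, M ≤ i ∨ M ≤ j → f i j = 0) :
    ∑ n ∈ Finset.range (2*M), ∑ k ∈ Finset.range (n+1), f k (n - k)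
      = ∑ i ∈ Finset.range M, ∑ j ∈ Finset.range M, f i j := by
  have hMle : M ≤ 2*M := by omega
  -- right side equals sum over the big square
  have hsq : ∑ i ∈ Finset.range M, ∑ j ∈ Finset.range M, f i j
      = ∑ i ∈ Finset.range (2*M), ∑ j ∈ Finset.range (2*M), f i j := by
    have inner : ∀ i, ∑ j ∈ Finset.range M, f i j = ∑ j ∈ Finset.range (2*M), f i j := by
      intro i
      apply Finset.sum_subset (Finset.range_subset_range.2 hMle)
      intro j _ hj
      exact hf i j (Or.inr (by simpa using hj))
    rw [Finset.sum_congr rfl (fun i _ => inner i)]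
    apply Finset.sum_subset (Finset.range_subset_range.2 hMle)
    intro i _ hi
    exact Finset.sum_eq_zero fun j _ => hf i j (Or.inl (by simpa using hi))
  rw [hsq, ← Finset.sum_product']
  rw [Finset.sum_sigma']
  -- now a bijection between the triangle (as a sigma type) and the filtered square
  rw [← Finset.sum_filter_add_sum_filter_not (Finset.range (2*M) ×ˢ Finset.range (2*M))
    (fun p => p.1 + p.2 < 2*M)]
  have hzero : ∑ p ∈ (Finset.range (2*M) ×ˢ Finset.range (2*M)).filter
      (fun p => ¬ p.1 + p.2 < 2*M), f p.1 p.2 = 0 := by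
    apply Finset.sum_eq_zero
    intro p hp
    rw [Finset.mem_filter, Finset.mem_product, Finset.mem_range, Finset.mem_range] at hp
    apply hf
    omega
  rw [hzero, add_zero]
  apply Finset.sum_nbij' (i := fun x => (x.2, x.1 - x.2)) (j := fun p => ⟨p.1 + p.2, p.1⟩)
  · intro x hx
    rw [Finset.mem_sigma, Finset.mem_range, Finset.mem_range] at hx
    simp only [Finset.mem_filter, Finset.mem_product, Finset.mem_range]
    omega
  · intro p hp
    rw [Finset.mem_filter, Finset.mem_product, Finset.mem_range, Finset.mem_range] at hp
    rw [Finset.mem_sigma, Finset.mem_range, Finset.mem_range]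
    dsimp only
    omega
  · intro x hx
    rw [Finset.mem_sigma, Finset.mem_range, Finset.mem_range] at hx
    ext <;> simp <;> omega
  · intro p hp
    simp
  · intro x hx
    rfl

lemma exp_ad {A : Type*} [Ring A] [Algebra ℚ A] {M : ℕ} {l : A} (hl : l ^ M = 0) (a : A) :
    ∑ n ∈ Finset.range (2*M), (n.factorial : ℚ)⁻¹ • (adA l)^[n] a
      = expNil M l * a * expNil M (-l) := by
  have hnl : (-l) ^ M = 0 := by rw [neg_pow, hl, mul_zero]
  have lhs_eq : ∑ n ∈ Finset.range (2*M), (n.factorial : ℚ)⁻¹ • (adA l)^[n] a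
      = ∑ n ∈ Finset.range (2*M), ∑ k ∈ Finset.range (n+1),
          (((k.factorial : ℚ))⁻¹ * (((n-k).factorial : ℚ))⁻¹) • (l ^ k * a * (-l) ^ (n - k)) := by
    apply Finset.sum_congr rfl
    intro n _
    rw [adA_iterate, Finset.smul_sum]
    apply Finset.sum_congr rfl
    intro k hk
    rw [Finset.mem_range] at hk
    have hkn : k ≤ n := by omega
    rw [← Nat.cast_smul_eq_nsmul ℚ, smul_smul]
    congr 1
    have hfact := Nat.choose_mul_factorial_mul_factorial hkn
    have h1 : ((k.factorial : ℚ)) ≠ 0 := Nat.cast_ne_zero.2 (Nat.factorial_ne_zero _)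
    have h2 : (((n-k).factorial : ℚ)) ≠ 0 := Nat.cast_ne_zero.2 (Nat.factorial_ne_zero _)
    have h3 : ((n.factorial : ℚ)) ≠ 0 := Nat.cast_ne_zero.2 (Nat.factorial_ne_zero _)
    have : ((n.choose k : ℚ)) * (k.factorial : ℚ) * ((n-k).factorial : ℚ) = (n.factorial : ℚ) := by
      exact_mod_cast congrArg (Nat.cast : ℕ → ℚ) hfact
    have key : ((n.choose k : ℕ) : ℚ) = (n.factorial : ℚ) / ((k.factorial : ℚ) * ((n-k).factorial : ℚ)) := by
      rw [eq_div_iff (by exact mul_ne_zero h1 h2)]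
      linear_combination this
    rw [key]
    field_simp
  rw [lhs_eq]
  have rhs_eq : expNil M l * a * expNil M (-l)
      = ∑ i ∈ Finset.range M, ∑ j ∈ Finset.range M,
          (((i.factorial : ℚ))⁻¹ * (((j).factorial : ℚ))⁻¹) • (l ^ i * a * (-l) ^ j) := by
    unfold expNil
    rw [Finset.sum_mul, Finset.sum_mul]
    apply Finset.sum_congr rfl
    intro i _
    rw [Finset.mul_sum]
    apply Finset.sum_congr rfl
    intro j _
    rw [smul_mul_assoc, smul_mul_assoc, mul_smul_comm, smul_smul]
  rw [rhs_eq]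
  apply triangle_sum M
    (f := fun i j => (((i.factorial : ℚ))⁻¹ * (((j).factorial : ℚ))⁻¹) • (l ^ i * a * (-l) ^ j))
  intro i j hij
  rcases hij with h | h
  · rw [pow_eq_zero_of_le h hl]
    simp
  · rw [pow_eq_zero_of_le h hnl]
    simp

section Memb
variable {A : Type*} [Ring A] [Algebra ℚ A] (I : Submodule ℚ A)
  (hIl : (⊤ : Submodule ℚ A) * I ≤ I) (hIr : I * (⊤ : Submodule ℚ A) ≤ I)

include hIr in
lemma mul_right_memI {z : A} (hz : z ∈ I) (c : A) : z * c ∈ I :=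
  hIr (Submodule.mul_mem_mul hz Submodule.mem_top)

include hIl in
lemma mul_left_memI {z : A} (hz : z ∈ I) (c : A) : c * z ∈ I :=
  hIl (Submodule.mul_mem_mul Submodule.mem_top hz)

include hIr in
lemma pow_memI {z : A} (hz : z ∈ I) : ∀ k, 1 ≤ k → z ^ k ∈ I := by
  intro k
  induction k with
  | zero => omega
  | succ k ih =>
    intro _
    rcases Nat.eq_zero_or_pos k with h | h
    · subst h; rw [pow_one]; exact hz
    · rw [pow_succ]
      exact mul_right_memI I hIr (ih (by omega)) z

include hIr in
lemma expNil_sub_one_memI {z : A} (hz : z ∈ I) {n : ℕ} (hn : 1 ≤ n) :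
    expNil n z - 1 ∈ I := by
  obtain ⟨m, rfl⟩ : ∃ m, n = m + 1 := ⟨n - 1, by omega⟩
  unfold expNil
  rw [Finset.sum_range_succ']
  simp only [pow_zero, Nat.factorial_zero, Nat.cast_one, inv_one, one_smul, add_sub_cancel_right]
  exact Submodule.sum_mem I fun k _ =>
    Submodule.smul_mem I _ (pow_memI I hIr hz (k+1) (by omega))

include hIr in
lemma logNil_memI {z : A} (hz : z ∈ I) (n : ℕ) : logNil n z ∈ I := by
  unfold logNil
  exact Submodule.sum_mem I fun k _ =>
    Submodule.smul_mem I _ (pow_memI I hIr hz (k+1) (by omega))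

end Memb

/-- `exp(ad_{BCH(x,y)}) = exp(ad_x) ∘ exp(ad_y)` as endomorphisms of `A`.
Since `x, y, BCH(x,y) ∈ I` and `I^N = ⊥`, all the adjoint operators involved
vanish from order `2N` on, so truncating the exponential series at `2N`
captures all (possibly) nonzero terms. -/
theorem exp_ad_bch {A : Type*} [Ring A] [Algebra ℚ A]
    (I : Submodule ℚ A)
    (hIl : (⊤ : Submodule ℚ A) * I ≤ I) (hIr : I * (⊤ : Submodule ℚ A) ≤ I)
    (N : ℕ) (hN : 1 ≤ N) (hnil : I ^ N = ⊥) :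
    ∀ x ∈ I, ∀ y ∈ I, ∀ a : A,
      ∑ n ∈ Finset.range (2 * N), (n.factorial : ℚ)⁻¹ • (adA (bch N x y))^[n] a
        = ∑ n ∈ Finset.range (2 * N), (n.factorial : ℚ)⁻¹ •
            (adA x)^[n] (∑ m ∈ Finset.range (2 * N), (m.factorial : ℚ)⁻¹ • (adA y)^[m] a) := by
  intro x hx y hy a
  have hxN : x ^ N = 0 := by
    have := Submodule.pow_mem_pow I hx N
    rwa [hnil, Submodule.mem_bot] at this
  have hyN : y ^ N = 0 := by
    have := Submodule.pow_mem_pow I hy N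
    rwa [hnil, Submodule.mem_bot] at this
  set u : A := expNil N x * expNil N y - 1 with hu
  have humem : u ∈ I := by
    have h1 : expNil N x - 1 ∈ I := expNil_sub_one_memI I hIr hx hN
    have h2 : expNil N y - 1 ∈ I := expNil_sub_one_memI I hIr hy hN
    have he : u = (expNil N x - 1) * expNil N y + (expNil N y - 1) := by rw [hu]; noncomm_ring
    rw [he]
    exact Submodule.add_mem I (mul_right_memI I hIr h1 _) h2
  have huN : u ^ N = 0 := by
    have := Submodule.pow_mem_pow I humem N
    rwa [hnil, Submodule.mem_bot] at this
  have hbdef : bch N x y = logNil N u := by rw [hu]; rfl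
  have hbmem : bch N x y ∈ I := by rw [hbdef]; exact logNil_memI I hIr humem N
  have hbN : (bch N x y) ^ N = 0 := by
    have := Submodule.pow_mem_pow I hbmem N
    rwa [hnil, Submodule.mem_bot] at this
  have hexpb : expNil N (bch N x y) = expNil N x * expNil N y := by
    have h1 : expNil (N+1) (logNil N u) = 1 + u := expNil_logNil huN
    have h2 : expNil N (bch N x y) = expNil (N+1) (bch N x y) :=
      (expNil_eq_of_le hbN (by omega)).symm
    rw [h2, hbdef, h1, hu]
    noncomm_ring
  have hinvb : expNil N (-(bch N x y)) = expNil N (-y) * expNil N (-x) := by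
    have h2 : expNil N (-(bch N x y)) * expNil N (bch N x y) = 1 := by
      have hnb : (-(bch N x y)) ^ N = 0 := by rw [neg_pow, hbN, mul_zero]
      have := expNil_mul_expNil_neg hN hnb
      rwa [neg_neg] at this
    have hy1 : expNil N y * expNil N (-y) = 1 := expNil_mul_expNil_neg hN hyN
    have hx1 : expNil N x * expNil N (-x) = 1 := expNil_mul_expNil_neg hN hxN
    have h3 : expNil N (bch N x y) * (expNil N (-y) * expNil N (-x)) = 1 := by
      rw [hexpb, mul_assoc, ← mul_assoc (expNil N y), hy1, one_mul, hx1]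
    calc expNil N (-(bch N x y)) = expNil N (-(bch N x y)) * 1 := (mul_one _).symm
      _ = expNil N (-(bch N x y)) * (expNil N (bch N x y)
            * (expNil N (-y) * expNil N (-x))) := by rw [h3]
      _ = (expNil N (-(bch N x y)) * expNil N (bch N x y))
            * (expNil N (-y) * expNil N (-x)) := by rw [mul_assoc]
      _ = expNil N (-y) * expNil N (-x) := by rw [h2, one_mul]
  rw [exp_ad hbN a, exp_ad hyN a, exp_ad hxN _, hexpb, hinvb]
  simp only [mul_assoc]
end

section
/- Gauge group action on Maurer–Cartan elements: in the ℤ/2-graded differential setting below, let λ ∈ 𝒜₀ be a nilpotent even element and let α ∈ 𝒜₁ be a Maurer–Cartan element (dα + α·α = 0). Then the element exp(ad_λ)(α) − Σ_{n≥0} (1/(n+1)!)·ad_λⁿ(dλ), i.e. Σ_{n≥0} (1/n!)·ad_λⁿ(α) − Σ_{n≥0} (1/(n+1)!)·ad_λⁿ(dλ), is again a Maurer–Cartan element: it lies in 𝒜₁ and satisfies the Maurer–Cartan equation dβ + β·β = 0. -/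
section helpers
variable {A : Type*} [Ring A] [Algebra ℚ A]

lemma adA_smul (x : A) (c : ℚ) (a : A) : adA x (c • a) = c • adA x a := by
  simp [adA, mul_smul_comm, smul_mul_assoc, smul_sub]

omit [Algebra ℚ A] in
lemma adA_zero (x : A) : adA x 0 = 0 := by simp [adA]
omit [Algebra ℚ A] in
lemma adA_one (x : A) : adA x 1 = 0 := by simp [adA]

lemma smul_cancelQ {c : ℚ} (hc : c ≠ 0) {a b : A} (h : c • a = c • b) : a = b := by
  have := congrArg (fun z => c⁻¹ • z) h
  simpa [smul_smul, inv_mul_cancel₀ hc] using this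

lemma fact_smul (i : ℕ) (y : A) :
    ((i:ℚ)+1) • (((i+1).factorial : ℚ)⁻¹ • y) = (i.factorial : ℚ)⁻¹ • y := by
  rw [smul_smul]
  congr 1
  have h2 : (i.factorial : ℚ) ≠ 0 := Nat.cast_ne_zero.mpr i.factorial_ne_zero
  have h1 : ((i:ℚ)+1) ≠ 0 := by positivity
  rw [Nat.factorial_succ]
  push_cast
  field_simp

omit [Algebra ℚ A] in
lemma pow_zero_of_le {x : A} {N : ℕ} (hx : x^N = 0) {i : ℕ} (h : N ≤ i) : x^i = 0 := by
  rw [← Nat.add_sub_cancel' h, pow_add, hx, zero_mul]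

open Finset in
lemma MCengine (x w : A) (u u' v : ℕ → A)
    (hu : ∀ i : ℕ, ((i : ℚ)+1) • u (i+1) = x * u i + w * u' i)
    (hv : ∀ j : ℕ, ((j : ℚ)+1) • v (j+1) = -(v j * x)) (k : ℕ) :
    ((k:ℚ)+1) • ∑ p ∈ Finset.HasAntidiagonal.antidiagonal (k+1), u p.1 * v p.2
      = adA x (∑ p ∈ Finset.HasAntidiagonal.antidiagonal k, u p.1 * v p.2)
        + w * ∑ p ∈ Finset.HasAntidiagonal.antidiagonal k, u' p.1 * v p.2 := by
  have h1 : ((k:ℚ)+1) • ∑ p ∈ Finset.HasAntidiagonal.antidiagonal (k+1), u p.1 * v p.2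
      = (∑ p ∈ Finset.HasAntidiagonal.antidiagonal (k+1), (p.1:ℚ) • (u p.1 * v p.2))
        + ∑ p ∈ Finset.HasAntidiagonal.antidiagonal (k+1), (p.2:ℚ) • (u p.1 * v p.2) := by
    rw [Finset.smul_sum, ← Finset.sum_add_distrib]
    refine Finset.sum_congr rfl fun p hp => ?_
    have h := Finset.HasAntidiagonal.mem_antidiagonal.mp hp
    rw [← add_smul]
    congr 1
    have : ((p.1 + p.2 : ℕ) : ℚ) = ((k:ℚ)+1) := by rw [h]; push_cast; ring
    push_cast at this ⊢
    linarith
  have h2 : (∑ p ∈ Finset.HasAntidiagonal.antidiagonal (k+1), (p.1:ℚ) • (u p.1 * v p.2))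
      = x * (∑ p ∈ Finset.HasAntidiagonal.antidiagonal k, u p.1 * v p.2)
        + w * ∑ p ∈ Finset.HasAntidiagonal.antidiagonal k, u' p.1 * v p.2 := by
    rw [Finset.Nat.sum_antidiagonal_succ (f := fun p => (p.1:ℚ) • (u p.1 * v p.2))]
    simp only [Nat.cast_zero, zero_smul, zero_add, Nat.cast_add, Nat.cast_one]
    rw [Finset.mul_sum, Finset.mul_sum, ← Finset.sum_add_distrib]
    refine Finset.sum_congr rfl fun p hp => ?_
    rw [← smul_mul_assoc, hu, add_mul, mul_assoc, mul_assoc]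
  have h3 : (∑ p ∈ Finset.HasAntidiagonal.antidiagonal (k+1), (p.2:ℚ) • (u p.1 * v p.2))
      = -((∑ p ∈ Finset.HasAntidiagonal.antidiagonal k, u p.1 * v p.2) * x) := by
    rw [Finset.Nat.sum_antidiagonal_succ' (f := fun p => (p.2:ℚ) • (u p.1 * v p.2))]
    simp only [Nat.cast_zero, zero_smul, zero_add, Nat.cast_add, Nat.cast_one]
    rw [Finset.sum_mul, ← Finset.sum_neg_distrib]
    refine Finset.sum_congr rfl fun p hp => ?_
    rw [← mul_smul_comm, hv, mul_neg, mul_assoc]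
  rw [h1, h2, h3, adA]
  abel

lemma lem_sigma (x : A) (k : ℕ) :
    ∑ p ∈ Finset.HasAntidiagonal.antidiagonal k,
        ((p.1.factorial : ℚ)⁻¹ • x ^ p.1) * ((p.2.factorial : ℚ)⁻¹ • (-x) ^ p.2)
      = if k = 0 then 1 else 0 := by
  induction k with
  | zero => simp
  | succ k ih =>
    have hu : ∀ i : ℕ, ((i : ℚ)+1) • ((fun i => (i.factorial : ℚ)⁻¹ • x ^ i) (i+1))
        = x * (fun i => (i.factorial : ℚ)⁻¹ • x ^ i) i
          + 0 * (fun i => (i.factorial : ℚ)⁻¹ • x ^ i) i := by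
      intro i
      simp only [zero_mul, add_zero, fact_smul, pow_succ']
      rw [mul_smul_comm]
    have hv : ∀ j : ℕ, ((j : ℚ)+1) • ((fun j => (j.factorial : ℚ)⁻¹ • (-x) ^ j) (j+1))
        = -((fun j => (j.factorial : ℚ)⁻¹ • (-x) ^ j) j * x) := by
      intro j
      simp only [fact_smul, pow_succ, mul_neg, smul_neg, smul_mul_assoc]
    have key := MCengine x 0 (fun i => (i.factorial : ℚ)⁻¹ • x ^ i)
      (fun i => (i.factorial : ℚ)⁻¹ • x ^ i) (fun j => (j.factorial : ℚ)⁻¹ • (-x) ^ j) hu hv k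
    simp only [zero_mul, add_zero] at key
    have hk1 : ((k:ℚ)+1) ≠ 0 := by positivity
    refine smul_cancelQ hk1 ?_
    rw [key, ih]
    by_cases h : k = 0 <;> simp [h, adA_one, adA_zero]

lemma lem_phi (x α : A) (k : ℕ) :
    ∑ p ∈ Finset.HasAntidiagonal.antidiagonal k,
        ((p.1.factorial : ℚ)⁻¹ • x ^ p.1) * (α * ((p.2.factorial : ℚ)⁻¹ • (-x) ^ p.2))
      = (k.factorial : ℚ)⁻¹ • (adA x)^[k] α := by
  induction k with
  | zero => simp
  | succ k ih =>
    have hu : ∀ i : ℕ, ((i : ℚ)+1) • ((fun i => (i.factorial : ℚ)⁻¹ • x ^ i) (i+1))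
        = x * (fun i => (i.factorial : ℚ)⁻¹ • x ^ i) i
          + 0 * (fun i => (i.factorial : ℚ)⁻¹ • x ^ i) i := by
      intro i
      simp only [zero_mul, add_zero, fact_smul, pow_succ']
      rw [mul_smul_comm]
    have hv : ∀ j : ℕ, ((j : ℚ)+1) •
          ((fun j => α * ((j.factorial : ℚ)⁻¹ • (-x) ^ j)) (j+1))
        = -((fun j => α * ((j.factorial : ℚ)⁻¹ • (-x) ^ j)) j * x) := by
      intro j
      simp only [fact_smul, pow_succ]
      simp [mul_neg, smul_neg, mul_smul_comm, smul_mul_assoc, mul_assoc]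
      exact fact_smul j _
    have key := MCengine x 0 (fun i => (i.factorial : ℚ)⁻¹ • x ^ i)
      (fun i => (i.factorial : ℚ)⁻¹ • x ^ i)
      (fun j => α * ((j.factorial : ℚ)⁻¹ • (-x) ^ j)) hu hv k
    simp only [zero_mul, add_zero] at key
    have hk1 : ((k:ℚ)+1) ≠ 0 := by positivity
    refine smul_cancelQ hk1 ?_
    rw [key, ih, adA_smul, Function.iterate_succ_apply', fact_smul]

lemma lem_psi (x : A) (d : A →ₗ[ℚ] A) (hd1 : d 1 = 0)
    (hle : ∀ i : ℕ, d (x^(i+1)) = d x * x^i + x * d (x^i)) (k : ℕ) :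
    ∑ p ∈ Finset.HasAntidiagonal.antidiagonal (k+1),
        ((p.1.factorial : ℚ)⁻¹ • d (x ^ p.1)) * ((p.2.factorial : ℚ)⁻¹ • (-x) ^ p.2)
      = ((k+1).factorial : ℚ)⁻¹ • (adA x)^[k] (d x) := by
  have hu : ∀ i : ℕ, ((i : ℚ)+1) • ((fun i => (i.factorial : ℚ)⁻¹ • d (x ^ i)) (i+1))
      = x * (fun i => (i.factorial : ℚ)⁻¹ • d (x ^ i)) i
        + (d x) * (fun i => (i.factorial : ℚ)⁻¹ • x ^ i) i := by
    intro i
    simp only [fact_smul, hle, smul_add, mul_smul_comm]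
    rw [add_comm]
  have hv : ∀ j : ℕ, ((j : ℚ)+1) • ((fun j => (j.factorial : ℚ)⁻¹ • (-x) ^ j) (j+1))
      = -((fun j => (j.factorial : ℚ)⁻¹ • (-x) ^ j) j * x) := by
    intro j
    simp only [fact_smul, pow_succ, mul_neg, smul_neg, smul_mul_assoc]
  induction k with
  | zero =>
    have key := MCengine x (d x) (fun i => (i.factorial : ℚ)⁻¹ • d (x ^ i))
      (fun i => (i.factorial : ℚ)⁻¹ • x ^ i) (fun j => (j.factorial : ℚ)⁻¹ • (-x) ^ j) hu hv 0
    simp only [Nat.cast_zero, zero_add, one_smul] at key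
    rw [key]
    have h0 : ∑ p ∈ Finset.HasAntidiagonal.antidiagonal 0,
        ((p.1.factorial : ℚ)⁻¹ • d (x ^ p.1)) * ((p.2.factorial : ℚ)⁻¹ • (-x) ^ p.2) = 0 := by
      simp [hd1]
    have h0' : (∑ p ∈ Finset.HasAntidiagonal.antidiagonal 0,
        ((p.1.factorial : ℚ)⁻¹ • x ^ p.1) * ((p.2.factorial : ℚ)⁻¹ • (-x) ^ p.2)) = 1 := by
      simp
    rw [h0, h0', adA_zero, zero_add, mul_one]
    simp
  | succ k ih =>
    have key := MCengine x (d x) (fun i => (i.factorial : ℚ)⁻¹ • d (x ^ i))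
      (fun i => (i.factorial : ℚ)⁻¹ • x ^ i) (fun j => (j.factorial : ℚ)⁻¹ • (-x) ^ j) hu hv (k+1)
    have hσ := lem_sigma x (k+1)
    simp only [Nat.add_eq_zero, and_false, if_false, one_ne_zero] at hσ
    rw [hσ, mul_zero, add_zero, ih] at key
    have hk1 : (((k+1 : ℕ):ℚ)+1) ≠ 0 := by positivity
    refine smul_cancelQ (c := ((k+1:ℕ):ℚ)+1) hk1 ?_
    push_cast at key ⊢
    rw [key, adA_smul, Function.iterate_succ_apply']
    have h2 := fact_smul (k+1) (adA x ((adA x)^[k] (d x)))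
    push_cast at h2
    exact h2.symm
end helpers
section helpers2
variable {A : Type*} [Ring A] [Algebra ℚ A]

open Finset in
lemma square_to_antidiag (f : ℕ → ℕ → A) {N K M : ℕ} (hN : 0 < N) (hK : 2*N ≤ K) (hM : N ≤ M)
    (h1 : ∀ i j, N ≤ i → f i j = 0) (h2 : ∀ i j, N ≤ j → f i j = 0) :
    ∑ i ∈ range M, ∑ j ∈ range M, f i j
      = ∑ k ∈ range K, ∑ p ∈ Finset.HasAntidiagonal.antidiagonal k, f p.1 p.2 := by
  have hvan : ∀ p : ℕ × ℕ, p ∉ range N ×ˢ range N → f p.1 p.2 = 0 := by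
    intro p hp
    rw [mem_product, mem_range, mem_range] at hp
    rcases not_and_or.mp hp with h | h
    · exact h1 _ _ (not_lt.mp h)
    · exact h2 _ _ (not_lt.mp h)
  have hsq : ∑ i ∈ range M, ∑ j ∈ range M, f i j = ∑ p ∈ range N ×ˢ range N, f p.1 p.2 := by
    rw [← Finset.sum_product']
    refine (Finset.sum_subset ?_ ?_).symm
    · exact Finset.product_subset_product (range_subset_range.mpr hM) (range_subset_range.mpr hM)
    · intro p _ hp
      exact hvan p hp
  have hdisj : (↑(range K) : Set ℕ).PairwiseDisjoint (fun k => Finset.HasAntidiagonal.antidiagonal k) := by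
    intro a _ b _ hab
    simp only [Function.onFun, Finset.disjoint_left]
    intro p hpa hpb
    exact hab ((Finset.HasAntidiagonal.mem_antidiagonal.mp hpa).symm.trans (Finset.HasAntidiagonal.mem_antidiagonal.mp hpb))
  have htr : ∑ k ∈ range K, ∑ p ∈ Finset.HasAntidiagonal.antidiagonal k, f p.1 p.2
      = ∑ p ∈ (range K).biUnion (fun k => Finset.HasAntidiagonal.antidiagonal k), f p.1 p.2 :=
    (Finset.sum_biUnion hdisj).symm
  have htr2 : ∑ p ∈ (range K).biUnion (fun k => Finset.HasAntidiagonal.antidiagonal k), f p.1 p.2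
      = ∑ p ∈ range N ×ˢ range N, f p.1 p.2 := by
    refine (Finset.sum_subset ?_ ?_).symm
    · intro p hp
      rw [mem_product, mem_range, mem_range] at hp
      rw [Finset.mem_biUnion]
      exact ⟨p.1 + p.2, by rw [mem_range]; omega, Finset.HasAntidiagonal.mem_antidiagonal.mpr rfl⟩
    · intro p _ hp
      exact hvan p hp
  rw [hsq, htr, htr2]

lemma expNil_mul_inv (x : A) {N : ℕ} (hN : 0 < N) (hx : x ^ N = 0) :
    expNil (2*N) x * expNil (2*N) (-x) = 1 := by
  have hx' : (-x) ^ N = 0 := by rw [neg_pow, hx, mul_zero]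
  rw [expNil, expNil, Finset.sum_mul_sum]
  rw [square_to_antidiag (fun i j => ((i.factorial:ℚ)⁻¹ • x ^ i) * ((j.factorial:ℚ)⁻¹ • (-x) ^ j))
      hN (le_refl (2*N)) (Nat.le_mul_of_pos_left N (by norm_num))
      (fun i j hi => by rw [pow_zero_of_le hx hi, smul_zero, zero_mul])
      (fun i j hj => by rw [pow_zero_of_le hx' hj, smul_zero, mul_zero])]
  have : ∀ k ∈ Finset.range (2*N), (∑ p ∈ Finset.HasAntidiagonal.antidiagonal k,
      ((p.1.factorial:ℚ)⁻¹ • x ^ p.1) * ((p.2.factorial:ℚ)⁻¹ • (-x) ^ p.2))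
        = if k = 0 then 1 else 0 := fun k _ => lem_sigma x k
  rw [Finset.sum_congr rfl this,
    Finset.sum_ite_eq' (Finset.range (2*N)) 0 (fun _ => (1:A)),
    if_pos (Finset.mem_range.mpr (by omega))]

lemma ident1 (x α : A) {N : ℕ} (hN : 0 < N) (hx : x ^ N = 0) :
    ∑ n ∈ Finset.range (2*N), (n.factorial : ℚ)⁻¹ • (adA x)^[n] α
      = expNil (2*N) x * α * expNil (2*N) (-x) := by
  have hx' : (-x) ^ N = 0 := by rw [neg_pow, hx, mul_zero]
  rw [expNil, expNil, Finset.sum_mul, Finset.sum_mul]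
  have hre : ∀ i ∈ Finset.range (2*N), ((i.factorial:ℚ)⁻¹ • x ^ i) * α *
        (∑ j ∈ Finset.range (2*N), (j.factorial:ℚ)⁻¹ • (-x) ^ j)
      = ∑ j ∈ Finset.range (2*N), ((i.factorial:ℚ)⁻¹ • x ^ i) * (α * ((j.factorial:ℚ)⁻¹ • (-x) ^ j)) := by
    intro i _
    rw [Finset.mul_sum]
    exact Finset.sum_congr rfl fun j _ => by rw [mul_assoc]
  rw [Finset.sum_congr rfl hre]
  rw [square_to_antidiag
      (fun i j => ((i.factorial:ℚ)⁻¹ • x ^ i) * (α * ((j.factorial:ℚ)⁻¹ • (-x) ^ j)))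
      hN (le_refl (2*N)) (Nat.le_mul_of_pos_left N (by norm_num))
      (fun i j hi => by rw [pow_zero_of_le hx hi, smul_zero, zero_mul])
      (fun i j hj => by rw [pow_zero_of_le hx' hj, smul_zero, mul_zero, mul_zero])]
  exact (Finset.sum_congr rfl fun k _ => lem_phi x α k).symm

lemma ident2 (x : A) (d : A →ₗ[ℚ] A) (hd1 : d 1 = 0)
    (hle : ∀ i : ℕ, d (x^(i+1)) = d x * x^i + x * d (x^i))
    {N : ℕ} (hN : 0 < N) (hx : x ^ N = 0) :
    ∑ n ∈ Finset.range (2*N), ((n + 1).factorial : ℚ)⁻¹ • (adA x)^[n] (d x)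
      = d (expNil (2*N) x) * expNil (2*N) (-x) := by
  have hx' : (-x) ^ N = 0 := by rw [neg_pow, hx, mul_zero]
  have hdE : d (expNil (2*N) x) = ∑ i ∈ Finset.range (2*N), (i.factorial:ℚ)⁻¹ • d (x ^ i) := by
    rw [expNil, map_sum]
    exact Finset.sum_congr rfl fun i _ => by rw [map_smul]
  rw [hdE, expNil, Finset.sum_mul]
  have hre : ∀ i ∈ Finset.range (2*N), ((i.factorial:ℚ)⁻¹ • d (x ^ i)) *
        (∑ j ∈ Finset.range (2*N), (j.factorial:ℚ)⁻¹ • (-x) ^ j)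
      = ∑ j ∈ Finset.range (2*N), ((i.factorial:ℚ)⁻¹ • d (x ^ i)) * ((j.factorial:ℚ)⁻¹ • (-x) ^ j) :=
    fun i _ => Finset.mul_sum _ _ _
  rw [Finset.sum_congr rfl hre]
  rw [square_to_antidiag
      (fun i j => ((i.factorial:ℚ)⁻¹ • d (x ^ i)) * ((j.factorial:ℚ)⁻¹ • (-x) ^ j))
      hN (by omega : 2*N ≤ 2*N+1) (Nat.le_mul_of_pos_left N (by norm_num))
      (fun i j hi => by rw [pow_zero_of_le hx hi, map_zero, smul_zero, zero_mul])
      (fun i j hj => by rw [pow_zero_of_le hx' hj, smul_zero, mul_zero])]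
  rw [Finset.sum_range_succ' (fun k => ∑ p ∈ Finset.HasAntidiagonal.antidiagonal k,
      ((p.1.factorial:ℚ)⁻¹ • d (x ^ p.1)) * ((p.2.factorial:ℚ)⁻¹ • (-x) ^ p.2)) (2*N)]
  have h0 : (∑ p ∈ Finset.HasAntidiagonal.antidiagonal 0,
      ((p.1.factorial:ℚ)⁻¹ • d (x ^ p.1)) * ((p.2.factorial:ℚ)⁻¹ • (-x) ^ p.2)) = 0 := by
    simp [hd1]
  rw [h0, add_zero]
  exact (Finset.sum_congr rfl fun k _ => lem_psi x d hd1 hle k).symm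

end helpers2

/-- Gauge group action on Maurer–Cartan elements: for a nilpotent even gauge
`λ` and a Maurer–Cartan element `α`, the element
`exp(ad_λ)(α) − Σ_{n≥0} ad_λⁿ(dλ)/(n+1)!` is again a Maurer–Cartan element. -/
theorem gauge_action_maurer_cartan {A : Type*} [Ring A] [Algebra ℚ A]
    (𝒜 : ZMod 2 → Submodule ℚ A)
    (hinternal : DirectSum.IsInternal 𝒜)
    (hone : (1 : A) ∈ 𝒜 0)
    (hmul : ∀ i j : ZMod 2, 𝒜 i * 𝒜 j ≤ 𝒜 (i + j))
    (d : A →ₗ[ℚ] A)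
    (hdgrade : ∀ i : ZMod 2, (𝒜 i).map d ≤ 𝒜 (i + 1))
    (hdsq : d ∘ₗ d = 0)
    (hleibniz : ∀ i : ZMod 2, ∀ a ∈ 𝒜 i, ∀ b : A,
      d (a * b) = d a * b + ((-1 : ℚ) ^ i.val) • (a * d b))
    (l : A) (N : ℕ) (hl : l ∈ 𝒜 0) (hlnil : l ^ N = 0)
    (α : A) (hα : α ∈ 𝒜 1) (hMC : d α + α * α = 0) :
    let β : A :=
      (∑ n ∈ Finset.range (2 * N), (n.factorial : ℚ)⁻¹ • (adA l)^[n] α)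
        - ∑ n ∈ Finset.range (2 * N), ((n + 1).factorial : ℚ)⁻¹ • (adA l)^[n] (d l)
    β ∈ 𝒜 1 ∧ d β + β * β = 0 := by
  intro β
  have hβ : β = (∑ n ∈ Finset.range (2 * N), (n.factorial : ℚ)⁻¹ • (adA l)^[n] α)
        - ∑ n ∈ Finset.range (2 * N), ((n + 1).factorial : ℚ)⁻¹ • (adA l)^[n] (d l) := rfl
  have h01 : (0 : ZMod 2) + 1 = 1 := by decide
  have h10 : (1 : ZMod 2) + 0 = 1 := by decide
  have h00 : (0 : ZMod 2) + 0 = 0 := by decide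
  have hdl : d l ∈ 𝒜 1 := by
    have := hdgrade 0 (Submodule.mem_map_of_mem hl)
    rwa [h01] at this
  have hmul01 : ∀ {a b : A}, a ∈ 𝒜 0 → b ∈ 𝒜 1 → a * b ∈ 𝒜 1 := fun ha hb => by
    have := hmul 0 1 (Submodule.mul_mem_mul ha hb); rwa [h01] at this
  have hmul10 : ∀ {a b : A}, a ∈ 𝒜 1 → b ∈ 𝒜 0 → a * b ∈ 𝒜 1 := fun ha hb => by
    have := hmul 1 0 (Submodule.mul_mem_mul ha hb); rwa [h10] at this
  have hmul00 : ∀ {a b : A}, a ∈ 𝒜 0 → b ∈ 𝒜 0 → a * b ∈ 𝒜 0 := fun ha hb => by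
    have := hmul 0 0 (Submodule.mul_mem_mul ha hb); rwa [h00] at this
  have hadmem : ∀ a ∈ 𝒜 1, adA l a ∈ 𝒜 1 := fun a ha =>
    sub_mem (hmul01 hl ha) (hmul10 ha hl)
  have hadit : ∀ n : ℕ, ∀ a ∈ 𝒜 1, (adA l)^[n] a ∈ 𝒜 1 := by
    intro n
    induction n with
    | zero => intro a ha; simpa using ha
    | succ n ih =>
      intro a ha
      rw [Function.iterate_succ_apply]
      exact ih _ (hadmem a ha)
  have hβmem : β ∈ 𝒜 1 := by
    rw [hβ]
    exact sub_mem
      (Submodule.sum_mem _ fun n _ => Submodule.smul_mem _ _ (hadit n α hα))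
      (Submodule.sum_mem _ fun n _ => Submodule.smul_mem _ _ (hadit n _ hdl))
  refine ⟨hβmem, ?_⟩
  rcases Nat.eq_zero_or_pos N with h0 | hN
  · subst h0
    simp only [Nat.mul_zero, Finset.range_zero, Finset.sum_empty, sub_zero] at hβ
    rw [hβ]
    simp
  have hval0 : ((0 : ZMod 2)).val = 0 := rfl
  have hval1 : ((1 : ZMod 2)).val = 1 := rfl
  have leib0 : ∀ a ∈ 𝒜 0, ∀ b : A, d (a * b) = d a * b + a * d b := by
    intro a ha b
    have := hleibniz 0 a ha b
    rwa [hval0, pow_zero, one_smul] at this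
  have leib1 : ∀ a ∈ 𝒜 1, ∀ b : A, d (a * b) = d a * b - a * d b := by
    intro a ha b
    have := hleibniz 1 a ha b
    rw [hval1, pow_one, neg_one_smul] at this
    rw [sub_eq_add_neg]
    exact this
  have hd1 : d (1 : A) = 0 := by
    have := leib0 1 hone 1
    simp only [one_mul, mul_one] at this
    exact left_eq_add.mp this
  have hle : ∀ i : ℕ, d (l ^ (i + 1)) = d l * l ^ i + l * d (l ^ i) := fun i => by
    rw [pow_succ']
    exact leib0 l hl (l ^ i)
  have hlnil' : (-l) ^ N = 0 := by rw [neg_pow, hlnil, mul_zero]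
  obtain ⟨E, hE_def⟩ : ∃ E : A, E = expNil (2*N) l := ⟨_, rfl⟩
  obtain ⟨F, hF_def⟩ : ∃ F : A, F = expNil (2*N) (-l) := ⟨_, rfl⟩
  have hEF : E * F = 1 := by
    rw [hE_def, hF_def]; exact expNil_mul_inv l hN hlnil
  have hFE : F * E = 1 := by
    rw [hE_def, hF_def]
    have := expNil_mul_inv (-l) hN hlnil'
    rwa [neg_neg] at this
  have hβ' : β = E * α * F - d E * F := by
    rw [hβ, hE_def, hF_def, ident1 l α hN hlnil, ident2 l d hd1 hle hN hlnil]
  have hpow0 : ∀ y : A, y ∈ 𝒜 0 → ∀ k : ℕ, y ^ k ∈ 𝒜 0 := by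
    intro y hy k
    induction k with
    | zero => simpa using hone
    | succ k ih => rw [pow_succ]; exact hmul00 ih hy
  have hE0 : E ∈ 𝒜 0 := by
    rw [hE_def, expNil]
    exact Submodule.sum_mem _ fun k _ => Submodule.smul_mem _ _ (hpow0 l hl k)
  have hF0 : F ∈ 𝒜 0 := by
    rw [hF_def, expNil]
    exact Submodule.sum_mem _ fun k _ => Submodule.smul_mem _ _ (hpow0 (-l) (neg_mem hl) k)
  have hdE1 : d E ∈ 𝒜 1 := by
    have := hdgrade 0 (Submodule.mem_map_of_mem hE0)
    rwa [h01] at this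
  have hddE : d (d E) = 0 := by
    have := LinearMap.congr_fun hdsq E
    simpa using this
  have hFdE : F * d E = -(d F * E) := by
    have h := leib0 F hF0 E
    rw [hFE, hd1] at h
    exact eq_neg_of_add_eq_zero_right h.symm
  have hcFE : ∀ y : A, F * (E * y) = y := fun y => by rw [← mul_assoc, hFE, one_mul]
  have hdP : d (E * α * F) = d E * (α * F) + (E * (d α * F) - E * (α * d F)) := by
    rw [mul_assoc, leib0 E hE0 (α * F), leib1 α hα F, mul_sub]
  have hdQ : d (d E * F) = -(d E * d F) := by
    rw [leib1 (d E) hdE1 F, hddE, zero_mul, zero_sub]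
  have hPP : (E * α * F) * (E * α * F) = E * (α * (α * F)) := by
    simp only [mul_assoc]
    rw [hcFE]
  have hQP : (d E * F) * (E * α * F) = d E * (α * F) := by
    simp only [mul_assoc]
    rw [hcFE]
  have hFdEF : F * (d E * F) = -(d F) := by
    rw [← mul_assoc, hFdE, neg_mul, mul_assoc, hEF, mul_one]
  have hPQ : (E * α * F) * (d E * F) = -(E * (α * d F)) := by
    simp only [mul_assoc]
    rw [hFdEF, mul_neg, mul_neg]
  have hQQ : (d E * F) * (d E * F) = -(d E * d F) := by
    simp only [mul_assoc]
    rw [hFdEF, mul_neg]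
  have hMC' : E * (d α * F) + E * (α * (α * F)) = 0 := by
    have h1 : d α * F + α * (α * F) = (d α + α * α) * F := by rw [add_mul, mul_assoc]
    rw [← mul_add, h1, hMC, zero_mul, mul_zero]
  rw [hβ', map_sub, sub_mul, mul_sub, mul_sub, hdP, hdQ, hPP, hPQ, hQP, hQQ]
  calc d E * (α * F) + (E * (d α * F) - E * (α * d F)) - -(d E * d F)
        + (E * (α * (α * F)) - -(E * (α * d F)) - (d E * (α * F) - -(d E * d F)))
      = E * (d α * F) + E * (α * (α * F)) := by abel
    _ = 0 := hMC'
end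

section
/- Derivative of the exponential: let A be a unital associative ℚ-algebra, D : A → A a ℚ-linear derivation (D(ab) = D(a)·b + a·D(b)), and λ ∈ A a nilpotent element. Then D(exp(λ))·exp(−λ) = Σ_{n≥0} (1/(n+1)!)·ad_λⁿ(D(λ)). -/
open Finset Polynomial

section Aux

variable {A : Type*} [Ring A] [Algebra ℚ A]

lemma D_one (D : A →ₗ[ℚ] A) (hD : ∀ a b : A, D (a * b) = D a * b + a * D b) : D 1 = 0 := by
  have h := hD 1 1; simpa using h

lemma D_pow (D : A →ₗ[ℚ] A) (hD : ∀ a b : A, D (a * b) = D a * b + a * D b) (x : A) :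
    ∀ k : ℕ, D (x ^ k) = ∑ i ∈ range k, x ^ i * D x * x ^ (k - 1 - i) := by
  intro k
  induction k with
  | zero => simp [D_one D hD]
  | succ k ih =>
    rw [pow_succ', hD, ih, Finset.sum_range_succ' (fun i => x ^ i * D x * x ^ (k + 1 - 1 - i))]
    rw [Finset.mul_sum]
    simp only [pow_zero, one_mul, Nat.add_sub_cancel, Nat.sub_zero]
    rw [add_comm]
    congr 1
    · apply Finset.sum_congr rfl
      intro i hi
      have h2 : k - (i + 1) = k - 1 - i := by omega
      rw [h2, pow_succ']
      noncomm_ring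

lemma tri {β : Type*} [AddCommMonoid β] (f : ℕ → ℕ → β) (M : ℕ) :
    ∑ k ∈ range M, ∑ i ∈ range k, f k i = ∑ i ∈ range M, ∑ k ∈ Finset.Ico (i+1) M, f k i := by
  induction M with
  | zero => simp
  | succ M ih =>
    rw [Finset.sum_range_succ, ih]
    symm
    rw [Finset.sum_range_succ]
    have h1 : ∀ i ∈ range M, ∑ k ∈ Finset.Ico (i+1) (M+1), f k i
        = (∑ k ∈ Finset.Ico (i+1) M, f k i) + f M i := by
      intro i hi
      have := Finset.mem_range.mp hi
      rw [Finset.sum_Ico_succ_top (by omega : i + 1 ≤ M)]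
    rw [Finset.sum_congr rfl h1, Finset.sum_add_distrib]
    rw [Finset.Ico_self, Finset.sum_empty, add_zero]

lemma tri' {β : Type*} [AddCommMonoid β] (f : ℕ → ℕ → β) (M : ℕ) :
    ∑ n ∈ range M, ∑ t ∈ range (n+1), f n t = ∑ t ∈ range M, ∑ n ∈ Finset.Ico t M, f n t := by
  induction M with
  | zero => simp
  | succ M ih =>
    rw [Finset.sum_range_succ, ih]
    symm
    rw [Finset.sum_range_succ]
    have h1 : ∀ t ∈ range M, ∑ n ∈ Finset.Ico t (M+1), f n t
        = (∑ n ∈ Finset.Ico t M, f n t) + f M t := by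
      intro t ht
      have := Finset.mem_range.mp ht
      rw [Finset.sum_Ico_succ_top (by omega : t ≤ M)]
    rw [Finset.sum_congr rfl h1, Finset.sum_add_distrib]
    rw [Nat.Ico_succ_singleton, Finset.sum_singleton, Finset.sum_range_succ, add_assoc]

lemma key : ∀ (j i : ℕ),
    ∑ m ∈ range (j+1), ((-1:ℚ)^m * ((m.factorial : ℚ))⁻¹ * (((i+j+1-m).factorial : ℚ))⁻¹)
      = (-1:ℚ)^j * ((i+j).choose j) * (((i+j+1).factorial : ℚ))⁻¹ := by
  intro j
  induction j with
  | zero => simp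
  | succ j ih =>
    intro i
    rw [Finset.sum_range_succ]
    have h1 : ∀ m ∈ range (j+1), ((-1:ℚ)^m * ((m.factorial : ℚ))⁻¹ * (((i+(j+1)+1-m).factorial : ℚ))⁻¹)
        = ((-1:ℚ)^m * ((m.factorial : ℚ))⁻¹ * ((((i+1)+j+1-m).factorial : ℚ))⁻¹) := by
      intro m hm
      have h : i+(j+1)+1-m = (i+1)+j+1-m := by omega
      rw [h]
    rw [Finset.sum_congr rfl h1, ih (i+1)]
    have h2 : i + (j+1) + 1 - (j+1) = i + 1 := by omega
    rw [h2]
    simp only [show i+1+j = i+j+1 from by omega, show i+1+j+1 = i+j+2 from by omega,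
      show i+(j+1) = i+j+1 from by omega, show i+(j+1)+1 = i+j+2 from by omega,
      show i+j+1+1 = i+j+2 from by omega]
    have hP : ((i+j+2).choose (j+1) : ℚ) = ((i+j+1).choose j : ℚ) + ((i+j+1).choose (j+1) : ℚ) := by
      exact_mod_cast congrArg (Nat.cast (R := ℚ)) (Nat.choose_succ_succ (i+j+1) j)
    have hF : ((i+j+2).choose (j+1) : ℚ) * ((j+1).factorial : ℚ) * ((i+1).factorial : ℚ)
        = ((i+j+2).factorial : ℚ) := by
      have h := Nat.choose_mul_factorial_mul_factorial (show j+1 ≤ i+j+2 by omega)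
      have hs : i + j + 2 - (j+1) = i + 1 := by omega
      rw [hs] at h
      exact_mod_cast h
    have n1 : (((j+1).factorial : ℚ)) ≠ 0 := by exact_mod_cast (Nat.factorial_ne_zero _)
    have n2 : (((i+1).factorial : ℚ)) ≠ 0 := by exact_mod_cast (Nat.factorial_ne_zero _)
    have n3 : (((i+j+2).factorial : ℚ)) ≠ 0 := by exact_mod_cast (Nat.factorial_ne_zero _)
    have hinv : (((j+1).factorial : ℚ))⁻¹ * (((i+1).factorial : ℚ))⁻¹
        = ((i+j+2).choose (j+1) : ℚ) * (((i+j+2).factorial : ℚ))⁻¹ := by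
      field_simp
      linear_combination -hF
    rw [pow_succ]
    linear_combination (-(-1:ℚ)^j) * hinv + (-(-1:ℚ)^j * (((i+j+2).factorial : ℚ))⁻¹) * hP

lemma adA_pow (l a : A) :
    ∀ n : ℕ, (adA l)^[n] a
      = ∑ t ∈ range (n+1), ((-1:ℚ)^(n-t) * (n.choose t : ℚ)) • (l^t * a * l^(n-t)) := by
  intro n
  induction n with
  | zero => simp
  | succ n ih =>
    rw [Function.iterate_succ_apply', ih]
    show l * _ - _ * l = _
    set c : ℕ → ℚ := fun t => (-1:ℚ)^(n-t) * (n.choose t : ℚ) with hc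
    have hL : l * (∑ t ∈ range (n+1), c t • (l^t * a * l^(n-t)))
        = ∑ t ∈ range (n+2), (if t = 0 then 0 else c (t-1)) • (l^t * a * l^(n+1-t)) := by
      rw [Finset.mul_sum,
        Finset.sum_range_succ' (fun t => (if t = 0 then 0 else c (t-1)) • (l^t * a * l^(n+1-t))) (n+1)]
      simp only [if_neg (Nat.succ_ne_zero _), eq_self_iff_true, if_true, zero_smul, add_zero]
      apply Finset.sum_congr rfl
      intro t ht
      have h1 : n + 1 - (t+1) = n - t := by omega
      rw [h1, Nat.add_sub_cancel, mul_smul_comm, ← mul_assoc, ← mul_assoc, ← pow_succ']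
    have hR : (∑ t ∈ range (n+1), c t • (l^t * a * l^(n-t))) * l
        = ∑ t ∈ range (n+2), c t • (l^t * a * l^(n+1-t)) := by
      rw [Finset.sum_range_succ (fun t => c t • (l^t * a * l^(n+1-t))) (n+1)]
      have hz : c (n+1) = 0 := by simp [hc, Nat.choose_succ_self]
      rw [hz, zero_smul, add_zero, Finset.sum_mul]
      apply Finset.sum_congr rfl
      intro t ht
      have htn := Finset.mem_range.mp ht
      have h1 : n + 1 - t = (n - t) + 1 := by omega
      rw [h1, smul_mul_assoc, mul_assoc, ← pow_succ]
    rw [hL, hR, ← Finset.sum_sub_distrib]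
    apply Finset.sum_congr rfl
    intro t ht
    rw [← sub_smul]
    congr 1
    match t with
    | 0 =>
      simp [hc, pow_succ]
    | Nat.succ s =>
      rw [if_neg (Nat.succ_ne_zero _), Nat.succ_sub_one]
      simp only [Nat.succ_eq_add_one]
      simp only [hc]
      have hch : ((n+1).choose (s+1) : ℚ) = (n.choose s : ℚ) + (n.choose (s+1) : ℚ) := by
        exact_mod_cast congrArg (Nat.cast (R := ℚ)) (Nat.choose_succ_succ n s)
      rw [hch]
      have h1 : n + 1 - (s+1) = n - s := by omega
      rw [h1]
      rcases lt_or_ge s n with hsn | hsn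
      · have h2 : n - s = (n - (s+1)) + 1 := by omega
        rw [h2, pow_succ]
        ring
      · have h2 : n - s = 0 := by omega
        have h3 : n - (s+1) = 0 := by omega
        have h4 : (n.choose (s+1) : ℚ) = 0 := by
          rw [Nat.choose_eq_zero_of_lt (by omega)]; norm_num
        rw [h2, h3, h4]
        ring

noncomputable def polyOf (c : ℕ → ℚ) (a : ℕ) : ℚ[X] :=
  ∑ j ∈ range a, Polynomial.C (c j) * Polynomial.X ^ j

lemma polyOf_coeff (c : ℕ → ℚ) (a m : ℕ) :
    (polyOf c a).coeff m = if m < a then c m else 0 := by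
  unfold polyOf
  rw [Polynomial.finset_sum_coeff]
  simp only [Polynomial.coeff_C_mul, Polynomial.coeff_X_pow, mul_ite, mul_one, mul_zero]
  rw [Finset.sum_ite_eq (range a) m c]
  simp [Finset.mem_range]

lemma polyOf_aeval (c : ℕ → ℚ) (a : ℕ) (x : A) :
    Polynomial.aeval x (polyOf c a) = ∑ j ∈ range a, c j • x ^ j := by
  unfold polyOf
  rw [map_sum]
  apply Finset.sum_congr rfl
  intro j _
  rw [map_mul, Polynomial.aeval_C, map_pow, Polynomial.aeval_X, Algebra.smul_def]

lemma aeval_trunc (x : A) (N : ℕ) (hx : x ^ N = 0) (s : ℚ[X]) :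
    Polynomial.aeval x s = ∑ j ∈ range N, s.coeff j • x ^ j := by
  have hB : s.natDegree < max (s.natDegree + 1) N :=
    lt_of_lt_of_le (Nat.lt_succ_self _) (le_max_left _ _)
  rw [Polynomial.aeval_eq_sum_range' hB]
  symm
  apply Finset.sum_subset
  · exact Finset.range_subset_range.mpr (le_max_right _ _)
  · intro j _ hj
    have hNj : N ≤ j := by
      by_contra h
      exact hj (Finset.mem_range.mpr (by omega))
    have hxz : x ^ j = 0 := by
      rw [show j = N + (j - N) by omega, pow_add, hx, zero_mul]
    rw [hxz, smul_zero]


lemma key2 (j i : ℕ) :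
    ∑ k ∈ range (j+1), (((i+k+1).factorial : ℚ))⁻¹ * ((-1:ℚ)^(j-k) * (((j-k).factorial : ℚ))⁻¹)
      = (-1:ℚ)^j * ((i+j).choose j) * (((i+j+1).factorial : ℚ))⁻¹ := by
  rw [← key j i,
    ← Finset.sum_range_reflect (fun m => (-1:ℚ)^m * ((m.factorial : ℚ))⁻¹ * (((i+j+1-m).factorial : ℚ))⁻¹) (j+1)]
  apply Finset.sum_congr rfl
  intro k hk
  have hk' := Finset.mem_range.mp hk
  have e1 : j + 1 - 1 - k = j - k := by omega
  have e2 : i + j + 1 - (j - k) = i + k + 1 := by omega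
  rw [e1, e2]
  ring

end Aux

theorem derivation_exp_formula {A : Type*} [Ring A] [Algebra ℚ A]
    (D : A →ₗ[ℚ] A) (hD : ∀ a b : A, D (a * b) = D a * b + a * D b)
    (l : A) (N : ℕ) (hlnil : l ^ N = 0) :
    D (expNil N l) * expNil N (-l)
      = ∑ n ∈ Finset.range (2 * N), ((n + 1).factorial : ℚ)⁻¹ • (adA l)^[n] (D l) := by
  rcases Nat.eq_zero_or_pos N with hN0 | hNpos
  · subst hN0
    simp [expNil]
  set M := 2 * N with hM
  have hpow0 : ∀ k, N ≤ k → l ^ k = 0 := by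
    intro k hk
    rw [show k = N + (k - N) by omega, pow_add, hlnil, zero_mul]
  have hext : ∀ x : A, (∀ k, N ≤ k → x ^ k = 0) → expNil N x = expNil M x := by
    intro x hx
    unfold expNil
    apply Finset.sum_subset (Finset.range_subset_range.mpr (by omega))
    intro k _ hk
    have hNk : N ≤ k := by
      by_contra h
      exact hk (Finset.mem_range.mpr (by omega))
    rw [hx k hNk, smul_zero]
  have hpow0' : ∀ k, N ≤ k → (-l) ^ k = 0 := by
    intro k hk
    rw [neg_pow, hpow0 k hk, mul_zero]
  rw [hext l hpow0, hext (-l) hpow0']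
  set Dl := D l with hDl
  have hQ : expNil M (-l) = ∑ m ∈ range M, ((-1:ℚ)^m * ((m.factorial : ℚ))⁻¹) • l ^ m := by
    unfold expNil
    apply Finset.sum_congr rfl
    intro m _
    rw [show (-l) = (-1 : ℚ) • l from (neg_one_smul ℚ l).symm, _root_.smul_pow, smul_smul, mul_comm]
  have hLHS : D (expNil M l) * expNil M (-l)
      = ∑ i ∈ range M, l ^ i * Dl *
          ((∑ j ∈ range (M - (i+1)), (((i+j+1).factorial : ℚ))⁻¹ • l ^ j)
            * (∑ m ∈ range M, ((-1:ℚ)^m * ((m.factorial : ℚ))⁻¹) • l ^ m)) := by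
    rw [hQ]
    unfold expNil
    rw [map_sum]
    have h1 : ∀ k ∈ range M, D ((k.factorial : ℚ)⁻¹ • l ^ k)
        = ∑ i ∈ range k, ((k.factorial : ℚ))⁻¹ • (l ^ i * Dl * l ^ (k - 1 - i)) := by
      intro k _
      rw [LinearMap.map_smul, D_pow D hD l k, Finset.smul_sum]
    rw [Finset.sum_congr rfl h1,
      tri (fun k i => ((k.factorial : ℚ))⁻¹ • (l ^ i * Dl * l ^ (k - 1 - i))) M]
    have h2 : ∀ i ∈ range M,
        ∑ k ∈ Finset.Ico (i+1) M, ((k.factorial : ℚ))⁻¹ • (l ^ i * Dl * l ^ (k - 1 - i))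
        = l ^ i * Dl * (∑ j ∈ range (M - (i+1)), (((i+j+1).factorial : ℚ))⁻¹ • l ^ j) := by
      intro i _
      rw [Finset.sum_Ico_eq_sum_range, Finset.mul_sum]
      apply Finset.sum_congr rfl
      intro j _
      have e1 : i + 1 + j - 1 - i = j := by omega
      have e2 : i + 1 + j = i + j + 1 := by omega
      rw [e1, e2, mul_smul_comm]
    rw [Finset.sum_congr rfl h2, Finset.sum_mul]
    apply Finset.sum_congr rfl
    intro i _
    rw [mul_assoc]
  have hRHS : ∑ n ∈ range M, ((n + 1).factorial : ℚ)⁻¹ • (adA l)^[n] Dl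
      = ∑ i ∈ range M, l ^ i * Dl *
          (∑ j ∈ range (M - i),
            ((-1:ℚ)^j * (((i+j).choose j : ℕ) : ℚ) * (((i+j+1).factorial : ℚ))⁻¹) • l ^ j) := by
    have h1 : ∀ n ∈ range M, ((n + 1).factorial : ℚ)⁻¹ • (adA l)^[n] Dl
        = ∑ t ∈ range (n+1),
            (((n+1).factorial : ℚ)⁻¹ * ((-1:ℚ)^(n-t) * (n.choose t : ℚ))) • (l^t * Dl * l^(n-t)) := by
      intro n _
      rw [adA_pow l Dl n, Finset.smul_sum]
      apply Finset.sum_congr rfl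
      intro t _
      rw [smul_smul]
    rw [Finset.sum_congr rfl h1,
      tri' (fun n t => (((n+1).factorial : ℚ)⁻¹ * ((-1:ℚ)^(n-t) * (n.choose t : ℚ))) • (l^t * Dl * l^(n-t))) M]
    apply Finset.sum_congr rfl
    intro i _
    rw [Finset.sum_Ico_eq_sum_range, Finset.mul_sum]
    apply Finset.sum_congr rfl
    intro j _
    have e1 : i + j - i = j := by omega
    rw [e1, mul_smul_comm]
    congr 1
    have hsym : ((i+j).choose i : ℚ) = ((i+j).choose j : ℚ) := by
      have h := Nat.choose_symm (show i ≤ i + j by omega)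
      have e : i + j - i = j := by omega
      rw [e] at h
      exact_mod_cast congrArg (Nat.cast (R := ℚ)) h.symm
    rw [hsym]
    ring
  rw [hLHS, hRHS]
  apply Finset.sum_congr rfl
  intro i hi
  rcases le_or_gt N i with hNi | hiN
  · rw [hpow0 i hNi]
    simp
  congr 1
  have hp : (∑ j ∈ range (M - (i+1)), (((i+j+1).factorial : ℚ))⁻¹ • l ^ j)
      = Polynomial.aeval l (polyOf (fun j => (((i+j+1).factorial : ℚ))⁻¹) (M - (i+1))) :=
    (polyOf_aeval _ _ _).symm
  have hq : (∑ m ∈ range M, ((-1:ℚ)^m * ((m.factorial : ℚ))⁻¹) • l ^ m)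
      = Polynomial.aeval l (polyOf (fun m => (-1:ℚ)^m * ((m.factorial : ℚ))⁻¹) M) :=
    (polyOf_aeval _ _ _).symm
  have hr : (∑ j ∈ range (M - i),
        ((-1:ℚ)^j * (((i+j).choose j : ℕ) : ℚ) * (((i+j+1).factorial : ℚ))⁻¹) • l ^ j)
      = Polynomial.aeval l
          (polyOf (fun j => (-1:ℚ)^j * (((i+j).choose j : ℕ) : ℚ) * (((i+j+1).factorial : ℚ))⁻¹) (M - i)) :=
    (polyOf_aeval _ _ _).symm
  rw [hp, hq, hr, ← map_mul, aeval_trunc l N hlnil, aeval_trunc l N hlnil]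
  apply Finset.sum_congr rfl
  intro j hj
  have hjN := Finset.mem_range.mp hj
  congr 1
  rw [Polynomial.coeff_mul, Finset.Nat.sum_antidiagonal_eq_sum_range_succ_mk]
  have hterm : ∀ k ∈ range (j+1),
      (polyOf (fun j' => (((i+j'+1).factorial : ℚ))⁻¹) (M - (i+1))).coeff k
        * (polyOf (fun m => (-1:ℚ)^m * ((m.factorial : ℚ))⁻¹) M).coeff (j-k)
      = (((i+k+1).factorial : ℚ))⁻¹ * ((-1:ℚ)^(j-k) * (((j-k).factorial : ℚ))⁻¹) := by
    intro k hk
    have hk' := Finset.mem_range.mp hk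
    rw [polyOf_coeff, polyOf_coeff, if_pos (by omega), if_pos (by omega)]
  rw [Finset.sum_congr rfl hterm, key2 j i, polyOf_coeff, if_pos (by omega)]
end
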